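/- Let π be the group with generators u₁,v₁,…,u_g,v_g,q₁,…,qₙ,h and relations: h central, ∏ᵢ[uᵢ,vᵢ]∏ⱼqⱼ = h^{2g−2}, qⱼ^{αⱼ}h^{αⱼ−1} = 1. Let δ : π → ℤ/r be a homomorphism with δ(h) = 1, δ(uᵢ) ≡ sᵢ, δ(vᵢ) ≡ tᵢ, δ(qⱼ) ≡ kⱼ mod r, and suppose the integers b, βⱼ satisfy rb = 2g−2−∑ⱼkⱼ and rβⱼ = αⱼ−1+kⱼαⱼ. Then the elements ũᵢ := uᵢh^{−sᵢ}, ṽᵢ := vᵢh^{−tᵢ}, q̃ⱼ := qⱼh^{−kⱼ}, h̃ := h^r of the kernel of δ satisfy the relations: h̃ central, ∏ᵢ[ũᵢ,ṽᵢ]∏ⱼq̃ⱼ = h̃^b and q̃ⱼ^{αⱼ}h̃^{βⱼ} = 1. -/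

import Mathlib

open scoped commutatorElement

inductive STGen (g n : ℕ) : Type
  | u (i : Fin g) : STGen g n
  | v (i : Fin g) : STGen g n
  | q (j : Fin n) : STGen g n
  | h : STGen g n

open FreeGroup in
def STRels (g n : ℕ) (α : Fin n → ℕ) : Set (FreeGroup (STGen g n)) :=
  {w | (∃ x : STGen g n, w = ⁅of (STGen.h : STGen g n), of x⁆) ∨
    w = ((List.finRange g).map fun i =>
          ⁅of (STGen.u i : STGen g n), of (STGen.v i : STGen g n)⁆).prod *
        ((List.finRange n).map fun j => of (STGen.q j : STGen g n)).prod *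
        (of (STGen.h : STGen g n)) ^ (-(2 * (g : ℤ) - 2)) ∨
    ∃ j : Fin n, w = (of (STGen.q j : STGen g n)) ^ (α j) *
        (of (STGen.h : STGen g n)) ^ (α j - 1)}

abbrev STPi (g n : ℕ) (α : Fin n → ℕ) := PresentedGroup (STRels g n α)

/-- Commutator with central factors. -/
theorem comm_aux {G : Type*} [Group G] {c d : G} (hc : ∀ x, Commute c x) (hd : ∀ x, Commute d x)
    (a b : G) : ⁅a*c, b*d⁆ = ⁅a,b⁆ := by
  have e1 : (a*c)⁻¹ = a⁻¹ * c⁻¹ := by rw [mul_inv_rev, ((hc a⁻¹).inv_left).eq]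
  have e2 : (b*d)⁻¹ = b⁻¹ * d⁻¹ := by rw [mul_inv_rev, ((hd b⁻¹).inv_left).eq]
  calc ⁅a*c, b*d⁆ = (a*c)*(b*d)*(a*c)⁻¹*(b*d)⁻¹ := commutatorElement_def _ _
    _ = (a*b)*(c*d)*(a⁻¹*c⁻¹)*(b⁻¹*d⁻¹) := by rw [(hc b).mul_mul_mul_comm, e1, e2]
    _ = (a*b)*a⁻¹*((c*d)*c⁻¹)*(b⁻¹*d⁻¹) := by rw [((hc a⁻¹).mul_left (hd a⁻¹)).mul_mul_mul_comm]
    _ = (a*b*a⁻¹)*d*(b⁻¹*d⁻¹) := by rw [(hc d).eq, mul_inv_cancel_right]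
    _ = (a*b*a⁻¹)*b⁻¹*(d*d⁻¹) := by rw [(hd b⁻¹).mul_mul_mul_comm]
    _ = ⁅a,b⁆ := by rw [mul_inv_cancel, mul_one, commutatorElement_def]

/-- Pulling central powers out of a list product. -/
theorem prod_mul_central {G ι : Type*} [Group G] {h : G} (hh : ∀ x, Commute h x)
    (Q : ι → G) (e : ι → ℤ) (l : List ι) :
    (l.map fun j => Q j * h ^ (e j)).prod = (l.map Q).prod * h ^ ((l.map e).sum) := by
  induction l with
  | nil => simp
  | cons a l ih =>
    simp only [List.map_cons, List.prod_cons, List.sum_cons, ih, zpow_add]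
    have : h ^ e a * (l.map Q).prod = (l.map Q).prod * h ^ e a :=
      ((hh _).zpow_left (e a)).eq
    rw [mul_assoc (Q a), ← mul_assoc (h ^ e a), this]
    simp [mul_assoc]

theorem kernel_presentation_relations (g n : ℕ) (α : Fin n → ℕ) (hα : ∀ j, 2 ≤ α j)
    (r : ℕ) (hr : 0 < r)
    (δ : STPi g n α →* Multiplicative (ZMod r))
    (hδh : δ (PresentedGroup.of STGen.h) = Multiplicative.ofAdd 1)
    (s t : Fin g → ℤ) (k : Fin n → ℤ) (b : ℤ) (β : Fin n → ℤ)
    (hs : ∀ i, δ (PresentedGroup.of (STGen.u i)) = Multiplicative.ofAdd ((s i : ZMod r)))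
    (ht : ∀ i, δ (PresentedGroup.of (STGen.v i)) = Multiplicative.ofAdd ((t i : ZMod r)))
    (hk : ∀ j, δ (PresentedGroup.of (STGen.q j)) = Multiplicative.ofAdd ((k j : ZMod r)))
    (hb : (r : ℤ) * b = 2 * (g : ℤ) - 2 - ∑ j, k j)
    (hβ : ∀ j, (r : ℤ) * β j = (α j : ℤ) - 1 + k j * (α j : ℤ)) :
    -- the elements ũᵢ, ṽᵢ, q̃ⱼ, h̃ of π
    (∀ i, (PresentedGroup.of (STGen.u i) * (PresentedGroup.of (STGen.h : STGen g n)) ^ (-(s i)) : STPi g n α) ∈ δ.ker) ∧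
    (∀ i, (PresentedGroup.of (STGen.v i) * (PresentedGroup.of (STGen.h : STGen g n)) ^ (-(t i)) : STPi g n α) ∈ δ.ker) ∧
    (∀ j, (PresentedGroup.of (STGen.q j) * (PresentedGroup.of (STGen.h : STGen g n)) ^ (-(k j)) : STPi g n α) ∈ δ.ker) ∧
    ((PresentedGroup.of (STGen.h : STGen g n) : STPi g n α) ^ (r : ℤ) ∈ δ.ker) ∧
    -- h̃ is central
    (∀ x : STPi g n α,
      (PresentedGroup.of (STGen.h : STGen g n) : STPi g n α) ^ (r : ℤ) * x =
        x * (PresentedGroup.of (STGen.h : STGen g n) : STPi g n α) ^ (r : ℤ)) ∧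
    -- the long relation ∏[ũᵢ,ṽᵢ]∏q̃ⱼ = h̃^b
    (((List.finRange g).map fun i =>
        ⁅(PresentedGroup.of (STGen.u i) * (PresentedGroup.of (STGen.h : STGen g n)) ^ (-(s i)) : STPi g n α),
          PresentedGroup.of (STGen.v i) * (PresentedGroup.of (STGen.h : STGen g n)) ^ (-(t i))⁆).prod *
      ((List.finRange n).map fun j =>
        (PresentedGroup.of (STGen.q j) * (PresentedGroup.of (STGen.h : STGen g n)) ^ (-(k j)) : STPi g n α)).prod =
      ((PresentedGroup.of (STGen.h : STGen g n) : STPi g n α) ^ (r : ℤ)) ^ b) ∧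
    -- the torsion relations q̃ⱼ^{αⱼ} h̃^{βⱼ} = 1
    (∀ j, (PresentedGroup.of (STGen.q j) * (PresentedGroup.of (STGen.h : STGen g n)) ^ (-(k j)) : STPi g n α) ^ (α j : ℤ) *
        ((PresentedGroup.of (STGen.h : STGen g n) : STPi g n α) ^ (r : ℤ)) ^ (β j) = 1) := by
  classical
  set H : STPi g n α := PresentedGroup.of STGen.h with hH
  -- every relator maps to 1
  have rel_one : ∀ w ∈ STRels g n α, PresentedGroup.mk (STRels g n α) w = 1 := by
    intro w hw
    exact (QuotientGroup.eq_one_iff w).mpr (Subgroup.subset_normalClosure hw)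
  have mk_of : ∀ x : STGen g n,
      PresentedGroup.mk (STRels g n α) (FreeGroup.of x) = PresentedGroup.of x := fun _ => rfl
  -- H is central
  have hcen : ∀ x : STPi g n α, Commute H x := by
    intro x
    have hx : x ∈ Subgroup.centralizer ({H} : Set (STPi g n α)) := by
      refine PresentedGroup.generated_by _ _ (fun j => ?_) x
      rw [Subgroup.mem_centralizer_iff]
      rintro y ⟨rfl⟩
      have h1 : PresentedGroup.mk (STRels g n α)
          ⁅FreeGroup.of (STGen.h : STGen g n), FreeGroup.of j⁆ = 1 :=
        rel_one _ (Or.inl ⟨j, rfl⟩)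
      rw [map_commutatorElement, mk_of, mk_of] at h1
      exact (commutatorElement_eq_one_iff_commute.mp h1).eq
    exact Subgroup.mem_centralizer_iff.mp hx H rfl
  have hcenz : ∀ (m : ℤ) (x : STPi g n α), Commute (H ^ m) x :=
    fun m x => (hcen x).zpow_left m
  -- δ on powers of H
  have δH : ∀ m : ℤ, δ (H ^ m) = Multiplicative.ofAdd ((m : ZMod r)) := by
    intro m
    rw [map_zpow, hδh, ← ofAdd_zsmul]
    congr 1
    simp [zsmul_eq_mul]
  -- kernel memberships
  have keru : ∀ i, (PresentedGroup.of (STGen.u i) * H ^ (-(s i)) : STPi g n α) ∈ δ.ker := by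
    intro i
    rw [MonoidHom.mem_ker, map_mul, hs, δH, ← ofAdd_add]
    simp
  have kerv : ∀ i, (PresentedGroup.of (STGen.v i) * H ^ (-(t i)) : STPi g n α) ∈ δ.ker := by
    intro i
    rw [MonoidHom.mem_ker, map_mul, ht, δH, ← ofAdd_add]
    simp
  have kerq : ∀ j, (PresentedGroup.of (STGen.q j) * H ^ (-(k j)) : STPi g n α) ∈ δ.ker := by
    intro j
    rw [MonoidHom.mem_ker, map_mul, hk, δH, ← ofAdd_add]
    simp
  have kerh : (H : STPi g n α) ^ (r : ℤ) ∈ δ.ker := by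
    rw [MonoidHom.mem_ker, δH]
    simp
  -- the long relation in π
  have R1 : ((List.finRange g).map fun i =>
        ⁅(PresentedGroup.of (STGen.u i) : STPi g n α), PresentedGroup.of (STGen.v i)⁆).prod *
      ((List.finRange n).map fun j => (PresentedGroup.of (STGen.q j) : STPi g n α)).prod *
      H ^ (-(2 * (g : ℤ) - 2)) = 1 := by
    have h1 := rel_one _ (Or.inr (Or.inl rfl))
    rw [map_mul, map_mul, map_zpow, map_list_prod, map_list_prod, List.map_map, List.map_map] at h1
    simpa [Function.comp_def, map_commutatorElement, mk_of] using h1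
  have R1' : ((List.finRange g).map fun i =>
        ⁅(PresentedGroup.of (STGen.u i) : STPi g n α), PresentedGroup.of (STGen.v i)⁆).prod *
      ((List.finRange n).map fun j => (PresentedGroup.of (STGen.q j) : STPi g n α)).prod =
      H ^ (2 * (g : ℤ) - 2) := by
    have h1 := R1
    rw [zpow_neg, mul_inv_eq_one] at h1
    exact h1
  -- torsion relations in π
  have R2 : ∀ j, (PresentedGroup.of (STGen.q j) : STPi g n α) ^ ((α j : ℤ)) =
      H ^ (-((α j : ℤ) - 1)) := by
    intro j
    have h1 := rel_one _ (Or.inr (Or.inr ⟨j, rfl⟩))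
    rw [map_mul, map_pow, map_pow, mk_of, mk_of] at h1
    have hcast : ((α j - 1 : ℕ) : ℤ) = (α j : ℤ) - 1 := by
      have := hα j; omega
    have h2 : (PresentedGroup.of (STGen.q j) : STPi g n α) ^ (α j) *
        H ^ ((α j : ℤ) - 1) = 1 := by
      rw [← hcast, zpow_natCast]; exact h1
    rw [zpow_natCast, zpow_neg]
    exact mul_eq_one_iff_eq_inv.mp h2
  refine ⟨keru, kerv, kerq, kerh, fun x => (hcenz (r : ℤ) x).eq, ?_, ?_⟩
  · -- long relation for the tilde elements
    have e1 : ((List.finRange g).map fun i =>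
        ⁅(PresentedGroup.of (STGen.u i) * H ^ (-(s i)) : STPi g n α),
          PresentedGroup.of (STGen.v i) * H ^ (-(t i))⁆) =
        ((List.finRange g).map fun i =>
        ⁅(PresentedGroup.of (STGen.u i) : STPi g n α), PresentedGroup.of (STGen.v i)⁆) := by
      refine List.map_congr_left (fun i _ => ?_)
      exact comm_aux (hcenz (-(s i))) (hcenz (-(t i))) _ _
    have e2 : ((List.finRange n).map fun j =>
        (PresentedGroup.of (STGen.q j) * H ^ (-(k j)) : STPi g n α)).prod =
        ((List.finRange n).map fun j => (PresentedGroup.of (STGen.q j) : STPi g n α)).prod *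
        H ^ (((List.finRange n).map fun j => -(k j)).sum) :=
      prod_mul_central hcen _ _ _
    have e3 : (((List.finRange n).map fun j => -(k j)).sum : ℤ) = -∑ j, k j := by
      rw [Fin.sum_univ_def]
      induction (List.finRange n) with
      | nil => simp
      | cons a l ih => simp [ih]; ring
    rw [e1, e2, e3, ← mul_assoc, R1', ← zpow_add, ← zpow_mul]
    congr 1
    omega
  · -- torsion relations for the tilde elements
    intro j
    have hcom : Commute (PresentedGroup.of (STGen.q j) : STPi g n α) (H ^ (-(k j))) :=
      (hcenz (-(k j)) _).symm
    rw [hcom.mul_zpow, R2 j, ← zpow_mul, ← zpow_mul, ← zpow_add, ← zpow_add]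
    convert zpow_zero H using 2
    have := hβ j
    nlinarith [hβ j]
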